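/- Let a_n be the recurrence coefficients of the orthonormal polynomials for the Freud weight |x|^ρ exp(-x⁶), ρ > -1, so that 6a_n²(a_{n-2}²a_{n-1}² + a_{n-1}⁴ + 2a_{n-1}²a_n² + a_{n-1}²a_{n+1}² + a_n⁴ + 2a_n²a_{n+1}² + a_{n+1}⁴ + a_{n+1}²a_{n+2}²) = n + ρΔ_n. Then lim_{n→∞} a_n/n^{1/6} = 60^{-1/6}. -/

import Mathlib

open Filter Topology Real

private lemma freud_aux_ratio (α β : ℝ) :
    Tendsto (fun n : ℕ => ((n:ℝ) + α) / ((n:ℝ) + β)) atTop (𝓝 1) := by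
  have hA : Tendsto (fun n : ℕ => 1 + α/(n:ℝ)) atTop (𝓝 1) := by
    simpa using tendsto_const_nhds.add (tendsto_const_div_atTop_nhds_zero_nat α)
  have hB : Tendsto (fun n : ℕ => 1 + β/(n:ℝ)) atTop (𝓝 1) := by
    simpa using tendsto_const_nhds.add (tendsto_const_div_atTop_nhds_zero_nat β)
  have h1 : Tendsto (fun n : ℕ => (1 + α/(n:ℝ)) / (1 + β/(n:ℝ))) atTop (𝓝 1) := by
    have h : Tendsto (fun n : ℕ => (1 + α/(n:ℝ)) / (1 + β/(n:ℝ))) atTop (𝓝 (1/1)) := hA.div hB one_ne_zero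
    simpa using h
  refine h1.congr' ?_
  filter_upwards [eventually_gt_atTop (⌈|β|⌉₊ + 1)] with n hn
  have hn0 : (0:ℝ) < n := by
    have : (0:ℕ) < n := by omega
    exact_mod_cast this
  have hβn : |β| < (n:ℝ) := by
    calc |β| ≤ ⌈|β|⌉₊ := Nat.le_ceil _
    _ < (n:ℝ) := by exact_mod_cast Nat.lt_of_succ_lt hn
  have hnβ : (n:ℝ) + β ≠ 0 := by
    have := neg_abs_le β
    nlinarith
  field_simp

private lemma freud_aux_le_of_freq {u : ℕ → ℝ} {x K : ℝ}
    (h : Tendsto u atTop (𝓝 x)) (hf : ∃ᶠ n in atTop, K ≤ u n) : K ≤ x := by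
  by_contra hK
  push_neg at hK
  have hev : ∀ᶠ n in atTop, u n < K := h.eventually (eventually_lt_nhds hK)
  rcases (hf.and_eventually hev).exists with ⟨n, h1, h2⟩
  exact absurd h1 (not_le.mpr h2)

private lemma freud_aux_ge_of_freq {u : ℕ → ℝ} {x K : ℝ}
    (h : Tendsto u atTop (𝓝 x)) (hf : ∃ᶠ n in atTop, u n ≤ K) : x ≤ K := by
  by_contra hK
  push_neg at hK
  have hev : ∀ᶠ n in atTop, K < u n := h.eventually (eventually_gt_nhds hK)
  rcases (hf.and_eventually hev).exists with ⟨n, h1, h2⟩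
  exact absurd h1 (not_le.mpr h2)


set_option maxHeartbeats 2000000 in
/-- For the Freud weight `|x|^ρ exp(-x⁶)`, the recurrence coefficients satisfying
the fourth-order Freud equation behave like `aₙ ~ (n/60)^{1/6}`. -/
theorem freud_m6_asymptotics (ρ : ℝ) (hρ : ρ > -1) (a : ℕ → ℝ)
    (ha0 : a 0 = 0)
    (hpos : ∀ n, 1 ≤ n → 0 < a n)
    (hrec : ∀ n : ℕ, 1 ≤ n →
      6 * (a n) ^ 2 * ((a (n - 2)) ^ 2 * (a (n - 1)) ^ 2 + (a (n - 1)) ^ 4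
        + 2 * (a (n - 1)) ^ 2 * (a n) ^ 2 + (a (n - 1)) ^ 2 * (a (n + 1)) ^ 2
        + (a n) ^ 4 + 2 * (a n) ^ 2 * (a (n + 1)) ^ 2 + (a (n + 1)) ^ 4
        + (a (n + 1)) ^ 2 * (a (n + 2)) ^ 2)
      = (n : ℝ) + ρ * (if Even n then 0 else 1)) :
    Tendsto (fun n : ℕ => a n / (n : ℝ) ^ ((1 : ℝ) / 6)) atTop
      (𝓝 ((60 : ℝ) ^ (-(1 : ℝ) / 6))) := by
  set b : ℕ → ℝ := fun n => a n ^ 2 with hb_def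
  set S : ℕ → ℝ := fun n => b (n-2) * b (n-1) + b (n-1)^2 + 2 * b (n-1) * b n
    + b (n-1) * b (n+1) + b n ^ 2 + 2 * b n * b (n+1) + b (n+1)^2 + b (n+1) * b (n+2)
    with hS_def
  have hb0 : b 0 = 0 := by simp [hb_def, ha0]
  have hbnn : ∀ n, 0 ≤ b n := fun n => sq_nonneg _
  have hΔ1 : ∀ n : ℕ, -1 ≤ ρ * (if Even n then (0:ℝ) else 1) := by
    intro n; split <;> simp <;> linarith
  have hΔ2 : ∀ n : ℕ, ρ * (if Even n then (0:ℝ) else 1) ≤ |ρ| := by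
    intro n; split
    · simp [abs_nonneg]
    · simpa using le_abs_self ρ
  have hrec' : ∀ n : ℕ, 1 ≤ n →
      6 * b n * S n = (n:ℝ) + ρ * (if Even n then 0 else 1) := by
    intro n hn
    rw [← hrec n hn]
    simp only [hS_def, hb_def]
    ring
  -- upper bound
  set B : ℝ := ((1 + |ρ|)/6) ^ ((1:ℝ)/3) with hB_def
  have hBpos : 0 < B := Real.rpow_pos_of_pos (by positivity) _
  have hub : ∀ n : ℕ, b n ≤ B * (n:ℝ) ^ ((1:ℝ)/3) := by
    intro n
    rcases Nat.eq_zero_or_pos n with h0 | h1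
    · subst h0; simp [hb0, Real.zero_rpow (by norm_num : (1:ℝ)/3 ≠ 0)]
    · have h := hrec' n h1
      have hS : b n ^ 2 ≤ S n := by
        simp only [hS_def]
        nlinarith [mul_nonneg (hbnn (n-2)) (hbnn (n-1)), sq_nonneg (b (n-1)),
          mul_nonneg (hbnn (n-1)) (hbnn n), mul_nonneg (hbnn (n-1)) (hbnn (n+1)),
          mul_nonneg (hbnn n) (hbnn (n+1)), sq_nonneg (b (n+1)),
          mul_nonneg (hbnn (n+1)) (hbnn (n+2))]
      have h6 : 6 * b n ^ 3 ≤ (n:ℝ) + |ρ| := by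
        nlinarith [hbnn n, hΔ2 n]
      have h3 : b n ^ 3 ≤ (1 + |ρ|)/6 * n := by
        have h1' : (1:ℝ) ≤ n := by exact_mod_cast h1
        nlinarith [abs_nonneg ρ]
      calc b n = (b n ^ 3) ^ ((1:ℝ)/3) := by
            rw [← Real.rpow_natCast (b n) 3, ← Real.rpow_mul (hbnn n)]
            norm_num
        _ ≤ ((1 + |ρ|)/6 * n) ^ ((1:ℝ)/3) :=
            Real.rpow_le_rpow (by positivity) h3 (by norm_num)
        _ = B * (n:ℝ) ^ ((1:ℝ)/3) := by
            rw [hB_def, ← Real.mul_rpow (by positivity) (Nat.cast_nonneg n)]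
  -- lower bound on b
  set Alb : ℝ := 1/(240 * B^2) with hA_def
  have hAlb : 0 < Alb := by positivity
  have hlb : ∀ n : ℕ, 2 ≤ n → Alb * (n:ℝ) ^ ((1:ℝ)/3) ≤ b n := by
    intro n hn2
    have h1 : 1 ≤ n := by omega
    set y : ℝ := ((n:ℝ)+2) ^ ((1:ℝ)/3) with hy_def
    have hy0 : 0 < y := Real.rpow_pos_of_pos (by positivity) _
    have hy3 : y^3 = (n:ℝ) + 2 := by
      rw [hy_def, ← Real.rpow_natCast _ 3, ← Real.rpow_mul (by positivity)]
      norm_num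
    set x : ℝ := (n:ℝ) ^ ((1:ℝ)/3) with hx_def
    have hx0 : 0 < x := Real.rpow_pos_of_pos (by exact_mod_cast h1) _
    have hxy : x ≤ y := Real.rpow_le_rpow (Nat.cast_nonneg n) (by linarith) (by norm_num)
    have hm : ∀ m : ℕ, m ≤ n + 2 → b m ≤ B * y := by
      intro m hmn
      calc b m ≤ B * (m:ℝ) ^ ((1:ℝ)/3) := hub m
        _ ≤ B * y := by
            have hmn' : (m:ℝ) ≤ (n:ℝ) + 2 := by
              have h := (Nat.cast_le (α := ℝ)).mpr hmn
              push_cast at h; linarith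
            have hmy : ((m:ℝ)) ^ ((1:ℝ)/3) ≤ y :=
              Real.rpow_le_rpow (Nat.cast_nonneg m) hmn' (by norm_num)
            exact mul_le_mul_of_nonneg_left hmy hBpos.le
    have hSub : S n ≤ 10 * (B*y)^2 := by
      have hT : 0 ≤ B * y := by positivity
      have p1 := mul_le_mul (hm (n-2) (by omega)) (hm (n-1) (by omega)) (hbnn _) hT
      have p2 := mul_le_mul (hm (n-1) (by omega)) (hm n (by omega)) (hbnn _) hT
      have p3 := mul_le_mul (hm (n-1) (by omega)) (hm (n+1) (by omega)) (hbnn _) hT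
      have p4 := mul_le_mul (hm n (by omega)) (hm (n+1) (by omega)) (hbnn _) hT
      have p5 := mul_le_mul (hm (n+1) (by omega)) (hm (n+2) (by omega)) (hbnn _) hT
      have q1 := mul_le_mul (hm (n-1) (by omega)) (hm (n-1) (by omega)) (hbnn _) hT
      have q2 := mul_le_mul (hm n (by omega)) (hm n (by omega)) (hbnn _) hT
      have q3 := mul_le_mul (hm (n+1) (by omega)) (hm (n+1) (by omega)) (hbnn _) hT
      simp only [hS_def]
      linarith
    have heq := hrec' n h1
    have hge : (n:ℝ) - 1 ≤ 60 * B^2 * y^2 * b n := by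
      have h0 : (n:ℝ) - 1 ≤ 6 * b n * S n := by
        have := hΔ1 n
        linarith [heq]
      have h2 : 6 * b n * S n ≤ 6 * b n * (10 * (B*y)^2) :=
        mul_le_mul_of_nonneg_left hSub (by positivity)
      nlinarith
    have hc : (0:ℝ) < 60 * B^2 * y^2 := by positivity
    have hkey : (60 * B^2 * y^2) * (Alb * x) ≤ (60 * B^2 * y^2) * b n := by
      have he : (60 * B^2 * y^2) * (Alb * x) = (1/4) * x * y^2 := by
        rw [hA_def]; field_simp; ring
      have hn2' : (2:ℝ) ≤ n := by exact_mod_cast hn2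
      have hq : (1/4) * x * y^2 ≤ (n:ℝ) - 1 := by nlinarith
      linarith
    exact le_of_mul_le_mul_left hkey hc
  -- the normalized sequence
  set c : ℕ → ℝ := fun n => b n / (n:ℝ) ^ ((1:ℝ)/3) with hc_def
  have hrpos : ∀ n : ℕ, 1 ≤ n → (0:ℝ) < (n:ℝ) ^ ((1:ℝ)/3) := by
    intro n hn
    exact Real.rpow_pos_of_pos (by exact_mod_cast hn) _
  have hcub : ∀ n : ℕ, 1 ≤ n → c n ≤ B := by
    intro n hn
    rw [hc_def]
    exact (div_le_iff₀ (hrpos n hn)).mpr (by simpa [mul_comm] using hub n)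
  have hclb : ∀ n : ℕ, 2 ≤ n → Alb ≤ c n := by
    intro n hn
    rw [hc_def]
    exact (le_div_iff₀ (hrpos n (by omega))).mpr (by simpa [mul_comm] using hlb n hn)
  have hbdd_above : IsBoundedUnder (· ≤ ·) atTop c :=
    isBoundedUnder_of_eventually_le (eventually_atTop.2 ⟨1, hcub⟩)
  have hbdd_below : IsBoundedUnder (· ≥ ·) atTop c :=
    isBoundedUnder_of_eventually_ge (eventually_atTop.2 ⟨2, hclb⟩)
  have hcob_le : IsCoboundedUnder (· ≤ ·) atTop c := hbdd_below.isCoboundedUnder_le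
  have hcob_ge : IsCoboundedUnder (· ≥ ·) atTop c := hbdd_above.isCoboundedUnder_ge
  set l : ℝ := liminf c atTop with hl_def
  set L : ℝ := limsup c atTop with hL_def
  have hlA : Alb ≤ l := le_liminf_of_le hcob_ge (eventually_atTop.2 ⟨2, hclb⟩)
  have hLB : L ≤ B := limsup_le_of_le hcob_le (eventually_atTop.2 ⟨1, hcub⟩)
  have hlL : l ≤ L := liminf_le_limsup hbdd_above hbdd_below
  have hl0 : 0 < l := lt_of_lt_of_le hAlb hlA
  have hL0 : 0 < L := lt_of_lt_of_le hl0 hlL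
  clear_value b S B Alb c l L
  have hSnn : ∀ n : ℕ, 0 ≤ S n := by
    intro n
    simp only [hS_def]
    have := mul_nonneg (hbnn (n-2)) (hbnn (n-1))
    have := mul_nonneg (hbnn (n-1)) (hbnn n)
    have := mul_nonneg (hbnn (n-1)) (hbnn (n+1))
    have := mul_nonneg (hbnn n) (hbnn (n+1))
    have := mul_nonneg (hbnn (n+1)) (hbnn (n+2))
    have := sq_nonneg (b (n-1))
    have := sq_nonneg (b n)
    have := sq_nonneg (b (n+1))
    linarith
  -- Key inequality 2 : at limsup points
  have key2 : 6*L*(5*l^2 + 4*l*L + L^2) ≤ 1 := by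
    have hmain : ∀ ε : ℝ, 0 < ε → ε < Alb →
        6*(L-ε)*(5*(l-ε)^2 + 4*(l-ε)*(L-ε) + (L-ε)^2) ≤ 1 := by
      intro ε hε hεA
      set p : ℝ := l - ε with hp_def
      set q : ℝ := L - ε with hq_def
      have hp : 0 < p := by rw [hp_def]; linarith
      have hq : 0 < q := by rw [hq_def]; linarith
      have hpq : p ≤ q := by rw [hp_def, hq_def]; linarith
      obtain ⟨N, hN⟩ : ∃ N, ∀ m, m ≥ N → p < c m :=
        eventually_atTop.1 (eventually_lt_of_lt_liminf (show p < liminf c atTop by rw [← hl_def, hp_def]; linarith) hbdd_below)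
      have hfr : ∃ᶠ n in atTop, q < c n :=
        frequently_lt_of_lt_limsup hcob_le (show q < limsup c atTop by rw [← hL_def, hq_def]; linarith)
      set K : ℝ := 6*q*(5*p^2 + 4*p*q + q^2) with hK_def
      have hfr2 : ∃ᶠ n : ℕ in atTop, K ≤ ((n:ℝ) + |ρ|)/((n:ℝ) + (-2)) := by
        refine (hfr.and_eventually (eventually_ge_atTop (N+3))).mono ?_
        rintro n ⟨hcn, hn⟩
        have hn3 : 3 ≤ n := by omega
        have hn1 : 1 ≤ n := by omega
        have hnR : (3:ℝ) ≤ (n:ℝ) := by exact_mod_cast hn3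
        set z : ℝ := ((n:ℝ) - 2) ^ ((1:ℝ)/3) with hz_def
        have hz0 : 0 < z := Real.rpow_pos_of_pos (by linarith) _
        have hz3 : z^3 = (n:ℝ) - 2 := by
          rw [hz_def, ← Real.rpow_natCast _ 3, ← Real.rpow_mul (by linarith)]
          norm_num
        have hlow : ∀ m : ℕ, n - 2 ≤ m → p * z ≤ b m := by
          intro m hm
          have hm1 : 1 ≤ m := by omega
          have h2 : p * (m:ℝ)^((1:ℝ)/3) ≤ b m := by
            have h1 : p ≤ c m := (hN m (by omega)).le
            simp only [hc_def] at h1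
            exact (le_div_iff₀ (hrpos m hm1)).mp h1
          have hcast : (n:ℝ) - 2 ≤ (m:ℝ) := by
            have : ((n-2:ℕ):ℝ) ≤ (m:ℝ) := by exact_mod_cast hm
            rw [Nat.cast_sub (by omega)] at this
            push_cast at this
            linarith
          have h3 : z ≤ (m:ℝ)^((1:ℝ)/3) :=
            Real.rpow_le_rpow (by linarith) hcast (by norm_num)
          nlinarith
        have hbn : q * z ≤ b n := by
          have h2 : q * (n:ℝ)^((1:ℝ)/3) ≤ b n := by
            have h1 : q ≤ c n := hcn.le
            simp only [hc_def] at h1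
            exact (le_div_iff₀ (hrpos n hn1)).mp h1
          have h3 : z ≤ (n:ℝ)^((1:ℝ)/3) :=
            Real.rpow_le_rpow (by linarith) (by linarith) (by norm_num)
          nlinarith
        have hpz : 0 ≤ p * z := by positivity
        have hqz : 0 ≤ q * z := by positivity
        have hS : (5*p^2 + 4*p*q + q^2) * z^2 ≤ S n := by
          have g1 := mul_le_mul (hlow (n-2) (le_refl _)) (hlow (n-1) (by omega)) hpz (hbnn _)
          have g2 := mul_le_mul (hlow (n-1) (by omega)) (hlow (n-1) (by omega)) hpz (hbnn _)
          have g3 := mul_le_mul (hlow (n-1) (by omega)) hbn hqz (hbnn _)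
          have g4 := mul_le_mul (hlow (n-1) (by omega)) (hlow (n+1) (by omega)) hpz (hbnn _)
          have g5 := mul_le_mul hbn hbn hqz (hbnn _)
          have g6 := mul_le_mul hbn (hlow (n+1) (by omega)) hpz (hbnn _)
          have g7 := mul_le_mul (hlow (n+1) (by omega)) (hlow (n+1) (by omega)) hpz (hbnn _)
          have g8 := mul_le_mul (hlow (n+1) (by omega)) (hlow (n+2) (by omega)) hpz (hbnn _)
          simp only [hS_def]
          linarith
        have hSn : K * ((n:ℝ)-2) ≤ 6 * b n * S n := by
          have hnn2 : 0 ≤ (5*p^2 + 4*p*q + q^2) * z^2 :=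
            mul_nonneg (by nlinarith) (sq_nonneg z)
          have h := mul_le_mul hbn hS hnn2 (hbnn n)
          calc K * ((n:ℝ)-2) = 6*((q*z)*((5*p^2 + 4*p*q + q^2)*z^2)) := by
                rw [← hz3, hK_def]; ring
            _ ≤ 6*(b n * S n) := by linarith
            _ = 6 * b n * S n := by ring
        have heq := hrec' n hn1
        have hfin : K * ((n:ℝ)-2) ≤ (n:ℝ) + |ρ| := le_trans hSn (by linarith [hΔ2 n])
        have hd : (0:ℝ) < (n:ℝ) + (-2) := by linarith
        rw [le_div_iff₀ hd]
        calc K * ((n:ℝ)+(-2)) = K*((n:ℝ)-2) := by ring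
          _ ≤ _ := hfin
      have hres := freud_aux_le_of_freq (freud_aux_ratio |ρ| (-2)) hfr2
      exact hres
    have hten : Tendsto (fun ε : ℝ => 6*(L-ε)*(5*(l-ε)^2 + 4*(l-ε)*(L-ε) + (L-ε)^2))
        (𝓝[>] 0) (𝓝 (6*(L-0)*(5*(l-0)^2 + 4*(l-0)*(L-0) + (L-0)^2))) :=
      ((Continuous.tendsto (by fun_prop) 0)).mono_left nhdsWithin_le_nhds
    have hle := le_of_tendsto hten
      (eventually_of_mem (Ioo_mem_nhdsGT_of_mem ⟨le_refl (0:ℝ), hAlb⟩)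
        (fun ε hε => hmain ε hε.1 hε.2))
    simpa using hle
  -- Key inequality 1 : at liminf points
  have key1 : 1 ≤ 6*l*(5*L^2 + 4*L*l + l^2) := by
    have hmain : ∀ ε : ℝ, 0 < ε →
        1 ≤ 6*(l+ε)*(5*(L+ε)^2 + 4*(L+ε)*(l+ε) + (l+ε)^2) := by
      intro ε hε
      set P : ℝ := l + ε with hP_def
      set Q : ℝ := L + ε with hQ_def
      have hP : 0 < P := by rw [hP_def]; linarith
      have hQ : 0 < Q := by rw [hQ_def]; linarith
      obtain ⟨N, hN⟩ : ∃ N, ∀ m, m ≥ N → c m < Q :=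
        eventually_atTop.1 (eventually_lt_of_limsup_lt (show limsup c atTop < Q by rw [← hL_def, hQ_def]; linarith) hbdd_above)
      have hfr : ∃ᶠ n in atTop, c n < P :=
        frequently_lt_of_liminf_lt hcob_ge (show liminf c atTop < P by rw [← hl_def, hP_def]; linarith)
      set K : ℝ := 6*P*(5*Q^2 + 4*Q*P + P^2) with hK_def
      have hfr2 : ∃ᶠ n : ℕ in atTop, ((n:ℝ) + (-1))/((n:ℝ) + 2) ≤ K := by
        refine (hfr.and_eventually (eventually_ge_atTop (N+3))).mono ?_
        rintro n ⟨hcn, hn⟩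
        have hn3 : 3 ≤ n := by omega
        have hn1 : 1 ≤ n := by omega
        have hnR : (3:ℝ) ≤ (n:ℝ) := by exact_mod_cast hn3
        set w : ℝ := ((n:ℝ) + 2) ^ ((1:ℝ)/3) with hw_def
        have hw0 : 0 < w := Real.rpow_pos_of_pos (by linarith) _
        have hw3 : w^3 = (n:ℝ) + 2 := by
          rw [hw_def, ← Real.rpow_natCast _ 3, ← Real.rpow_mul (by linarith)]
          norm_num
        have hupp : ∀ m : ℕ, n - 2 ≤ m → m ≤ n + 2 → b m ≤ Q * w := by
          intro m hm hm2
          have hm1 : 1 ≤ m := by omega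
          have h2 : b m ≤ Q * (m:ℝ)^((1:ℝ)/3) := by
            have h1 : c m ≤ Q := (hN m (by omega)).le
            simp only [hc_def] at h1
            exact (div_le_iff₀ (hrpos m hm1)).mp h1
          have hcast : (m:ℝ) ≤ (n:ℝ) + 2 := by
            have : (m:ℝ) ≤ ((n+2:ℕ):ℝ) := by exact_mod_cast hm2
            push_cast at this
            linarith
          have h3 : (m:ℝ)^((1:ℝ)/3) ≤ w :=
            Real.rpow_le_rpow (Nat.cast_nonneg m) hcast (by norm_num)
          nlinarith
        have hbn : b n ≤ P * w := by
          have h2 : b n ≤ P * (n:ℝ)^((1:ℝ)/3) := by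
            have h1 : c n ≤ P := hcn.le
            simp only [hc_def] at h1
            exact (div_le_iff₀ (hrpos n hn1)).mp h1
          have h3 : (n:ℝ)^((1:ℝ)/3) ≤ w :=
            Real.rpow_le_rpow (Nat.cast_nonneg n) (by linarith) (by norm_num)
          nlinarith
        have hQw : 0 ≤ Q * w := by positivity
        have hPw : 0 ≤ P * w := by positivity
        have hS : S n ≤ (5*Q^2 + 4*Q*P + P^2) * w^2 := by
          have g1 := mul_le_mul (hupp (n-2) (by omega) (by omega)) (hupp (n-1) (by omega) (by omega)) (hbnn _) hQw
          have g2 := mul_le_mul (hupp (n-1) (by omega) (by omega)) (hupp (n-1) (by omega) (by omega)) (hbnn _) hQw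
          have g3 := mul_le_mul (hupp (n-1) (by omega) (by omega)) hbn (hbnn _) hQw
          have g4 := mul_le_mul (hupp (n-1) (by omega) (by omega)) (hupp (n+1) (by omega) (by omega)) (hbnn _) hQw
          have g5 := mul_le_mul hbn hbn (hbnn _) hPw
          have g6 := mul_le_mul hbn (hupp (n+1) (by omega) (by omega)) (hbnn _) hPw
          have g7 := mul_le_mul (hupp (n+1) (by omega) (by omega)) (hupp (n+1) (by omega) (by omega)) (hbnn _) hQw
          have g8 := mul_le_mul (hupp (n+1) (by omega) (by omega)) (hupp (n+2) (by omega) (by omega)) (hbnn _) hQw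
          simp only [hS_def]
          linarith
        have hSn : 6 * b n * S n ≤ K * ((n:ℝ)+2) := by
          have h := mul_le_mul hbn hS (hSnn n) hPw
          calc 6 * b n * S n = 6*(b n * S n) := by ring
            _ ≤ 6*((P*w)*((5*Q^2 + 4*Q*P + P^2)*w^2)) := by linarith
            _ = K * ((n:ℝ)+2) := by rw [← hw3, hK_def]; ring
        have heq := hrec' n hn1
        have hfin : (n:ℝ) - 1 ≤ K * ((n:ℝ)+2) := le_trans (by linarith [hΔ1 n]) hSn
        have hd : (0:ℝ) < (n:ℝ) + 2 := by linarith
        rw [div_le_iff₀ hd]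
        calc (n:ℝ) + (-1) = (n:ℝ) - 1 := by ring
          _ ≤ K * ((n:ℝ)+2) := hfin
      have hres := freud_aux_ge_of_freq (freud_aux_ratio (-1) 2) hfr2
      exact hres
    have hten : Tendsto (fun ε : ℝ => 6*(l+ε)*(5*(L+ε)^2 + 4*(L+ε)*(l+ε) + (l+ε)^2))
        (𝓝[>] 0) (𝓝 (6*(l+0)*(5*(L+0)^2 + 4*(L+0)*(l+0) + (l+0)^2))) :=
      ((Continuous.tendsto (by fun_prop) 0)).mono_left nhdsWithin_le_nhds
    have hle := ge_of_tendsto hten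
      (eventually_of_mem (Ioo_mem_nhdsGT_of_mem ⟨le_refl (0:ℝ), hAlb⟩)
        (fun ε hε => hmain ε hε.1))
    simpa using hle
  -- l = L and identification of the limit
  have hLl : L ≤ l := by
    nlinarith [key1, key2, add_pos (pow_pos hL0 2) (pow_pos hl0 2), hlL, hl0, hL0]
  have hEq' : L = l := le_antisymm hLl hlL
  rw [hEq'] at key1 key2
  have hcube : 60 * l^3 = 1 := by
    have h1 : 1 ≤ 60 * l^3 := by nlinarith [key1]
    have h2 : 60 * l^3 ≤ 1 := by nlinarith [key2]
    linarith
  have hlval : l = (60:ℝ) ^ (-(1:ℝ)/3) := by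
    have h3 : l = (l^3) ^ ((1:ℝ)/3) := by
      rw [← Real.rpow_natCast l 3, ← Real.rpow_mul hl0.le]
      norm_num
    have hl3 : l^3 = (60:ℝ) ^ (-1:ℝ) := by
      rw [Real.rpow_neg_one]
      have : (60:ℝ) ≠ 0 := by norm_num
      field_simp
      linarith
    rw [h3, hl3, ← Real.rpow_mul (by norm_num : (0:ℝ) ≤ 60)]
    norm_num
  have hctend : Tendsto c atTop (𝓝 ((60:ℝ) ^ (-(1:ℝ)/3))) := by
    apply tendsto_of_liminf_eq_limsup ?_ ?_ hbdd_above hbdd_below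
    · rw [← hl_def]; exact hlval
    · rw [← hL_def, hEq']; exact hlval
  have hsq : Tendsto (fun n => Real.sqrt (c n)) atTop
      (𝓝 (Real.sqrt ((60:ℝ) ^ (-(1:ℝ)/3)))) :=
    (Real.continuous_sqrt.tendsto _).comp hctend
  have hval : Real.sqrt ((60:ℝ) ^ (-(1:ℝ)/3)) = (60:ℝ) ^ (-(1:ℝ)/6) := by
    rw [Real.sqrt_eq_rpow, ← Real.rpow_mul (by norm_num : (0:ℝ) ≤ 60)]
    norm_num
  rw [← hval]
  refine hsq.congr' ?_
  filter_upwards [eventually_ge_atTop 1] with n hn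
  have hn0 : (0:ℝ) < (n:ℝ) := by exact_mod_cast hn
  rw [hc_def]
  simp only
  rw [Real.sqrt_eq_rpow, Real.div_rpow (hbnn n) (Real.rpow_nonneg hn0.le _),
    ← Real.rpow_mul hn0.le]
  norm_num
  rw [hb_def]
  simp only
  rw [← Real.sqrt_eq_rpow, Real.sqrt_sq (hpos n hn).le]
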